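/- (Andréief integration identity.) Let $(X,\mu)$ be a measure space, $V \subseteq X$ measurable, and let $f_1,\dots,f_N, g_1,\dots,g_N : X \to \mathbb{C}$ be measurable functions such that each product $f_i \overline{g_j}$ is integrable over $V$. Then $\int_{V^N} \det\big[f_i(z_j)\big]_{1\le i,j \le N}\; \overline{\det\big[g_i(z_j)\big]_{1\le i,j \le N}}\; d\mu^N(z_1,\dots,z_N) = N!\, \det\Big[\int_V f_i(z)\, \overline{g_j(z)}\, d\mu(z)\Big]_{1\le i,j\le N}$. -/

import Mathlib

open MeasureTheory

private lemma restrict_pi_const {X : Type*} [MeasurableSpace X] (μ : Measure X) [SigmaFinite μ]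
    (V : Set X) (hV : MeasurableSet V) (N : ℕ) :
    (Measure.pi fun _ : Fin N => μ).restrict (Set.univ.pi fun _ => V)
      = Measure.pi fun _ : Fin N => μ.restrict V := by
  refine (Measure.pi_eq fun s hs => ?_).symm
  rw [Measure.restrict_apply (MeasurableSet.univ_pi hs), ← Set.pi_inter_distrib,
    Measure.pi_pi]
  exact Finset.prod_congr rfl fun i _ => (Measure.restrict_apply (hs i)).symm

/-- Andréief integration identity:
`∫_{V^N} det[fᵢ(zⱼ)] conj(det[gᵢ(zⱼ)]) dμ^N = N! det[∫_V fᵢ(z) conj(gⱼ(z)) dμ]`. -/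
theorem andreief_identity {X : Type*} [MeasurableSpace X] (μ : Measure X) [SigmaFinite μ]
    (V : Set X) (hV : MeasurableSet V) (N : ℕ) (f g : Fin N → X → ℂ)
    (hf : ∀ i, Measurable (f i)) (hg : ∀ i, Measurable (g i))
    (hint : ∀ i j, IntegrableOn (fun z => f i z * (starRingEnd ℂ) (g j z)) V μ) :
    ∫ z in Set.univ.pi (fun _ : Fin N => V),
        Matrix.det (Matrix.of fun i j => f i (z j)) *
          (starRingEnd ℂ) (Matrix.det (Matrix.of fun i j => g i (z j)))
        ∂(Measure.pi fun _ => μ)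
      = (N.factorial : ℂ) *
          Matrix.det (Matrix.of fun i j => ∫ z in V, f i z * (starRingEnd ℂ) (g j z) ∂μ) := by
  classical
  set A : Matrix (Fin N) (Fin N) ℂ :=
    Matrix.of fun i j => ∫ z in V, f i z * (starRingEnd ℂ) (g j z) ∂μ with hA
  -- rewrite the restricted pi measure as a pi of restricted measures
  rw [show (∫ z in Set.univ.pi (fun _ : Fin N => V),
        Matrix.det (Matrix.of fun i j => f i (z j)) *
          (starRingEnd ℂ) (Matrix.det (Matrix.of fun i j => g i (z j)))
        ∂(Measure.pi fun _ => μ))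
      = ∫ z, Matrix.det (Matrix.of fun i j => f i (z j)) *
          (starRingEnd ℂ) (Matrix.det (Matrix.of fun i j => g i (z j)))
        ∂(Measure.pi fun _ : Fin N => μ.restrict V) from by
      rw [restrict_pi_const μ V hV N]]
  letI : MeasureSpace X := ⟨μ.restrict V⟩
  haveI : SigmaFinite (volume : Measure X) := by
    show SigmaFinite (μ.restrict V); infer_instance
  have hvol : (Measure.pi fun _ : Fin N => μ.restrict V) = (volume : Measure (Fin N → X)) := by
    rw [MeasureTheory.volume_pi]
    rfl
  rw [hvol]
  have key : ∀ z : Fin N → X,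
      Matrix.det (Matrix.of fun i j => f i (z j)) *
        (starRingEnd ℂ) (Matrix.det (Matrix.of fun i j => g i (z j)))
      = ∑ σ : Equiv.Perm (Fin N), ∑ τ : Equiv.Perm (Fin N),
          ((Equiv.Perm.sign σ : ℤ) : ℂ) * ((Equiv.Perm.sign τ : ℤ) : ℂ) *
            ∏ j, (f (σ j) (z j) * (starRingEnd ℂ) (g (τ j) (z j))) := by
    intro z
    rw [Matrix.det_apply', Matrix.det_apply', map_sum, Finset.sum_mul_sum]
    refine Finset.sum_congr rfl fun σ _ => Finset.sum_congr rfl fun τ _ => ?_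
    rw [map_mul, map_prod, map_intCast, Finset.prod_mul_distrib]
    simp only [Matrix.of_apply]
    ring
  simp_rw [key]
  have hIntProd : ∀ σ τ : Equiv.Perm (Fin N),
      Integrable (fun z : Fin N → X =>
        ∏ j, (f (σ j) (z j) * (starRingEnd ℂ) (g (τ j) (z j)))) := by
    intro σ τ
    exact Integrable.fintype_prod (f := fun j z => f (σ j) z * (starRingEnd ℂ) (g (τ j) z))
      (fun j => hint (σ j) (τ j))
  rw [integral_finset_sum _ (fun σ _ => by
    refine integrable_finset_sum _ (fun τ _ => ?_)
    exact (hIntProd σ τ).const_mul _)]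
  have step : ∀ σ : Equiv.Perm (Fin N),
      (∫ z : Fin N → X, ∑ τ : Equiv.Perm (Fin N),
          ((Equiv.Perm.sign σ : ℤ) : ℂ) * ((Equiv.Perm.sign τ : ℤ) : ℂ) *
            ∏ j, (f (σ j) (z j) * (starRingEnd ℂ) (g (τ j) (z j))))
      = ∑ τ : Equiv.Perm (Fin N),
          ((Equiv.Perm.sign σ : ℤ) : ℂ) * ((Equiv.Perm.sign τ : ℤ) : ℂ) *
            ∏ j, A (σ j) (τ j) := by
    intro σ
    rw [integral_finset_sum _ (fun τ _ => (hIntProd σ τ).const_mul _)]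
    refine Finset.sum_congr rfl fun τ _ => ?_
    rw [integral_const_mul]
    congr 1
    rw [volume_pi, integral_fintype_prod_eq_prod (ι := Fin N)
      (f := fun j z => f (σ j) z * (starRingEnd ℂ) (g (τ j) z))]
    rfl
  simp_rw [step]
  -- now the algebraic identity
  rw [Finset.sum_comm]
  have inner : ∀ τ : Equiv.Perm (Fin N),
      (∑ σ : Equiv.Perm (Fin N),
        ((Equiv.Perm.sign σ : ℤ) : ℂ) * ((Equiv.Perm.sign τ : ℤ) : ℂ) * ∏ j, A (σ j) (τ j))
      = A.det := by
    intro τ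
    rw [← Equiv.sum_comp (Equiv.mulRight τ)
      (fun σ => ((Equiv.Perm.sign σ : ℤ) : ℂ) * ((Equiv.Perm.sign τ : ℤ) : ℂ) *
        ∏ j, A (σ j) (τ j)), Matrix.det_apply']
    refine Finset.sum_congr rfl fun σ _ => ?_
    simp only [Equiv.coe_mulRight, Equiv.Perm.mul_apply]
    rw [← Equiv.prod_comp τ (fun k => A (σ k) k)]
    have hsgn : ((Equiv.Perm.sign (σ * τ) : ℤ) : ℂ)
        = ((Equiv.Perm.sign σ : ℤ) : ℂ) * ((Equiv.Perm.sign τ : ℤ) : ℂ) := by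
      rw [map_mul]; push_cast [Units.val_mul]; ring
    rw [hsgn]
    rcases Int.units_eq_one_or (Equiv.Perm.sign τ) with h | h <;> simp [h] <;> ring
  simp_rw [inner]
  simp [Finset.sum_const, Fintype.card_perm, mul_comm]
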